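/- (Mean-payoff parity and energy parity differ for MDPs) There exists an MDP M = (Q, E, δ) with Q₁ = ∅ (i.e., a Markov chain), a priority function p : Q → {0,1}, a weight function w : Q × Q → ℤ, and a state q ∈ Q such that, for the unique (trivial) strategy, P_q(Parity(p) ∩ MeanPayoff^{≥0}) = 1, while for every initial credit c₀ ∈ ℕ, P_q(Parity(p) ∩ PosEnergy(c₀)) < 1. -/

import Mathlib

open MeasureTheory Filter
open scoped Classical ENNReal

namespace MPP

/-- A Markov decision process: states `Q`, player-1 states `Q1` (the rest are
probabilistic), edge relation `E` with every state having a successor, and a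
probabilistic transition function `δ` whose support at every probabilistic state
is exactly the set of successors. -/
structure MDP (Q : Type) where
  Q1 : Set Q
  E : Q → Q → Prop
  E_nonempty : ∀ q, ∃ q', E q q'
  δ : Q → PMF Q
  δ_support : ∀ q, q ∉ Q1 → ∀ q', q' ∈ (δ q).support ↔ E q q'

/-- A strategy: given the history `h` (the states strictly before the current one)
and the current state `q`, if `q` is a player-1 state it selects a distribution on
successors of `q`. -/
structure Strategy {Q : Type} (M : MDP Q) where
  act : List Q → Q → PMF Q
  act_support : ∀ h q, q ∈ M.Q1 → ∀ q', q' ∈ (act h q).support → M.E q q'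

variable {Q : Type}

/-- One step of the history-dependent transition kernel. -/
noncomputable def MDP.step (M : MDP Q) (σ : Strategy M) (h : List Q) (q : Q) : PMF Q :=
  if q ∈ M.Q1 then σ.act h q else M.δ q

/-- Probability of traversing the finite sequence `future` starting at `q` with
past history `h`. -/
noncomputable def pathProb (M : MDP Q) (σ : Strategy M) : List Q → Q → List Q → ℝ≥0∞
  | _, _, [] => 1
  | h, q, q' :: rest => M.step σ h q q' * pathProb M σ (h ++ [q]) q' rest

/-- `μ` is the trajectory measure (Ionescu–Tulcea) on plays of `M` under strategy
`σ`, starting at `q`: it is the (unique) probability measure on `ℕ → Q` (product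
σ-algebra) giving every cylinder its product probability. -/
def IsTrajMeasure [MeasurableSpace Q] (M : MDP Q) (σ : Strategy M) (q : Q)
    (μ : Measure (ℕ → Q)) : Prop :=
  IsProbabilityMeasure μ ∧
    ∀ (n : ℕ) (f : ℕ → Q),
      μ {ρ | ∀ i ≤ n, ρ i = f i} =
        if f 0 = q then pathProb M σ [] q ((List.range n).map fun i => f (i + 1)) else 0

/-- The set of states occurring infinitely often in a play. -/
def infSet (ρ : ℕ → Q) : Set Q := {s | ∀ N, ∃ n, N ≤ n ∧ ρ n = s}

/-- End-component: nonempty, closed under probabilistic transitions, every state has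
a successor inside, and strongly connected inside. -/
def MDP.IsEndComponent (M : MDP Q) (U : Set Q) : Prop :=
  U.Nonempty ∧
    (∀ q ∈ U, q ∉ M.Q1 → (M.δ q).support ⊆ U) ∧
    (∀ q ∈ U, ∃ q' ∈ U, M.E q q') ∧
    ∀ q ∈ U, ∀ q' ∈ U, Relation.ReflTransGen (fun a b => a ∈ U ∧ b ∈ U ∧ M.E a b) q q'

/-- Energy level of the length-`n` prefix of a play. -/
def EL (w : Q → Q → ℤ) (ρ : ℕ → Q) (n : ℕ) : ℤ :=
  ∑ i ∈ Finset.range n, w (ρ i) (ρ (i + 1))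

/-- Mean payoff (liminf of averages) of a play. -/
noncomputable def MP (w : Q → Q → ℤ) (ρ : ℕ → Q) : ℝ :=
  liminf (fun n => (EL w ρ n : ℝ) / n) atTop

/-- Parity objective: the minimal priority visited infinitely often is even. -/
def ParitySet (p : Q → ℕ) : Set (ℕ → Q) := {ρ | Even (sInf (p '' infSet ρ))}

def MeanPayoffGe (w : Q → Q → ℤ) (ν : ℝ) : Set (ℕ → Q) := {ρ | ν ≤ MP w ρ}

def MeanPayoffGt (w : Q → Q → ℤ) (ν : ℝ) : Set (ℕ → Q) := {ρ | ν < MP w ρ}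

/-- Energy objective with initial credit `c₀`. -/
def PosEnergy (w : Q → Q → ℤ) (c₀ : ℕ) : Set (ℕ → Q) :=
  {ρ | ∀ n, 0 ≤ (c₀ : ℤ) + EL w ρ n}

/-- Büchi objective: some state of `B` is visited infinitely often. -/
def Buchi (B : Set Q) : Set (ℕ → Q) := {ρ | (infSet ρ ∩ B).Nonempty}

/-- Expected mean-payoff value: supremum over strategies of the expectation of the
mean payoff under the trajectory measure. -/
noncomputable def ValMP [MeasurableSpace Q] (M : MDP Q) (w : Q → Q → ℤ) (q : Q) : ℝ :=
  sSup {x | ∃ σ : Strategy M, ∃ μ : Measure (ℕ → Q),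
    IsTrajMeasure M σ q μ ∧ x = ∫ ρ, MP w ρ ∂μ}


/-- Mean-payoff parity and energy parity differ for MDPs: there is a Markov chain
(an MDP with no player-1 states) with a priority function to `{0,1}` and a weight
function, and a state from which (under the unique, trivial strategy) the mean-payoff
parity objective holds almost surely while for every initial credit the energy parity
objective fails with positive probability. -/
-- the example Markov chain
noncomputable def exM : MDP Bool where
  Q1 := ∅
  E := fun a b => a = false ∨ b = true
  E_nonempty := fun _ => ⟨true, Or.inr rfl⟩
  δ := fun q => if q then PMF.pure true else PMF.uniformOfFintype Bool
  δ_support := by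
    intro q _ q'
    cases q <;> cases q' <;>
      simp [PMF.support_uniformOfFintype, PMF.support_pure]

lemma exM_step (σ : Strategy exM) (h : List Bool) (q : Bool) :
    exM.step σ h q = if q then PMF.pure true else PMF.uniformOfFintype Bool := by
  simp [MDP.step, exM]

lemma exM_step_false (σ : Strategy exM) (h : List Bool) (b : Bool) :
    exM.step σ h false b = 2⁻¹ := by
  rw [exM_step]
  simp [PMF.uniformOfFintype_apply]

lemma pathProb_allfalse (σ : Strategy exM) :
    ∀ (l : List Bool) (h : List Bool), (∀ x ∈ l, x = false) →
      pathProb exM σ h false l = 2⁻¹ ^ l.length := by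
  intro l
  induction l with
  | nil => intro h _; simp [pathProb]
  | cons a t ih =>
    intro h hall
    have ha : a = false := hall a (by simp)
    subst ha
    rw [pathProb, exM_step_false, ih _ (fun x hx => hall x (by simp [hx]))]
    rw [List.length_cons, pow_succ]
    ring

lemma pathProb_zero (σ : Strategy exM) :
    ∀ (l : List Bool) (h : List Bool) (q : Bool),
      (∃ i, (q :: l)[i]? = some true ∧ (q :: l)[i + 1]? = some false) →
      pathProb exM σ h q l = 0 := by
  intro l
  induction l with
  | nil =>
    rintro h q ⟨i, h1, h2⟩
    rcases i with _ | i <;> simp_all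
  | cons a t ih =>
    rintro h q ⟨i, h1, h2⟩
    rcases i with _ | i
    · simp only [List.getElem?_cons_succ, List.getElem?_cons_zero] at h1 h2
      obtain rfl : q = true := by simpa using h1
      obtain rfl : a = false := by simpa using h2
      rw [pathProb, exM_step]
      simp
    · have : pathProb exM σ (h ++ [q]) a t = 0 := by
        exact ih _ a ⟨i, h1, h2⟩
      rw [pathProb, this, mul_zero]


def exw : Bool → Bool → ℤ := fun a b => if a || b then 0 else -1

lemma exw_tt : exw true true = 0 := rfl

lemma EL_allfalse (ρ : ℕ → Bool) (n : ℕ) (h : ∀ i ≤ n, ρ i = false) :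
    EL exw ρ n = -n := by
  have : ∀ i ∈ Finset.range n, exw (ρ i) (ρ (i + 1)) = -1 := by
    intro i hi
    rw [Finset.mem_range] at hi
    rw [h i (le_of_lt hi), h (i + 1) hi]
    rfl
  rw [EL, Finset.sum_congr rfl this]
  simp

theorem meanpayoff_parity_ne_energy_parity :
    ∃ (Q : Type) (_ : Fintype Q) (_ : Nonempty Q) (mQ : MeasurableSpace Q)
      (_ : @MeasurableSingletonClass Q mQ)
      (M : MDP Q) (p : Q → ℕ) (w : Q → Q → ℤ) (q : Q),
      M.Q1 = ∅ ∧ (∀ s, p s ≤ 1) ∧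
        ∀ (σ : Strategy M) (μ : @Measure (ℕ → Q) (by exact MeasurableSpace.pi)),
          @IsTrajMeasure Q mQ M σ q μ →
            μ (ParitySet p ∩ MeanPayoffGe w 0) = 1 ∧
              ∀ c₀ : ℕ, μ (ParitySet p ∩ PosEnergy w c₀) < 1 := by
  refine ⟨Bool, inferInstance, inferInstance, inferInstance, inferInstance,
    exM, (fun _ => 0), exw, false, rfl, fun _ => Nat.zero_le 1, ?_⟩
  rintro σ μ ⟨hprob, hcyl⟩
  haveI := hprob
  -- measurability of cylinders
  have hmc : ∀ (n : ℕ) (f : ℕ → Bool), MeasurableSet {ρ : ℕ → Bool | ∀ i ≤ n, ρ i = f i} := by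
    intro n f
    have : {ρ : ℕ → Bool | ∀ i ≤ n, ρ i = f i}
        = ⋂ i ∈ Set.Iic n, (fun ρ : ℕ → Bool => ρ i) ⁻¹' {f i} := by
      ext ρ; simp
    rw [this]
    exact MeasurableSet.biInter (Set.to_countable _)
      fun i _ => (measurable_pi_apply i) (measurableSet_singleton _)
  -- measure of the all-false cylinders
  have hc : ∀ n : ℕ, μ {ρ : ℕ → Bool | ∀ i ≤ n, ρ i = false} = 2⁻¹ ^ n := by
    intro n
    have h := hcyl n (fun _ => false)
    rw [if_pos rfl] at h
    rw [h, pathProb_allfalse]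
    · simp
    · intro x hx
      rw [List.mem_map] at hx
      obtain ⟨i, _, rfl⟩ := hx
      rfl
  -- null sets: a true followed by a false
  have hB : ∀ n : ℕ, μ {ρ : ℕ → Bool | ρ n = true ∧ ρ (n + 1) = false} = 0 := by
    intro n
    set g : (Fin (n + 2) → Bool) → ℕ → Bool :=
      fun v j => if h : j < n + 2 then v ⟨j, h⟩ else false with hg
    have hsub : {ρ : ℕ → Bool | ρ n = true ∧ ρ (n + 1) = false} ⊆
        ⋃ v : Fin (n + 2) → Bool,
          {ρ : ℕ → Bool | (ρ n = true ∧ ρ (n + 1) = false) ∧ ∀ i ≤ n + 1, ρ i = g v i} := by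
      intro ρ hρ
      refine Set.mem_iUnion.2 ⟨fun j => ρ j, hρ, ?_⟩
      intro i hi
      have : i < n + 2 := by omega
      simp [hg, this]
    refine le_antisymm (le_trans (measure_mono hsub) (le_trans (measure_iUnion_le _) ?_))
      zero_le
    have hv0 : ∀ v : Fin (n + 2) → Bool,
        μ {ρ : ℕ → Bool | (ρ n = true ∧ ρ (n + 1) = false) ∧ ∀ i ≤ n + 1, ρ i = g v i} = 0 := by
      intro v
      by_cases hv : g v n = true ∧ g v (n + 1) = false
      · refine le_antisymm (le_trans (measure_mono (show _ ⊆ {ρ : ℕ → Bool | ∀ i ≤ n + 1, ρ i = g v i} from fun ρ hρ => hρ.2)) ?_) zero_le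
        rw [hcyl (n + 1) (g v)]
        by_cases h0 : g v 0 = false
        · rw [if_pos h0]
          rw [pathProb_zero]
          refine ⟨n, ?_, ?_⟩
          · have hlt : n < n + 1 := Nat.lt_succ_self n
            rcases n with _ | m
            · exact absurd hv.1 (by simp [h0])
            · show (List.map (fun i => g v (i + 1)) (List.range (m + 2)))[m]? = some true
              rw [List.getElem?_map, List.getElem?_range (by omega)]
              simp [hv.1]
          · show (List.map (fun i => g v (i + 1)) (List.range (n + 1)))[n]? = some false
            rw [List.getElem?_map, List.getElem?_range (by omega)]
            simp [hv.2]
        · rw [if_neg h0]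
      · have : {ρ : ℕ → Bool | (ρ n = true ∧ ρ (n + 1) = false) ∧ ∀ i ≤ n + 1, ρ i = g v i}
            = ∅ := by
          ext ρ
          simp only [Set.mem_setOf_eq, Set.mem_empty_iff_false, iff_false, not_and]
          rintro ⟨h1, h2⟩ h3
          exact hv ⟨(h3 n (Nat.le_succ n)) ▸ h1, (h3 (n + 1) le_rfl) ▸ h2⟩
        rw [this, measure_empty]
    simp [hv0]
  -- null set: all false forever
  have hA : μ {ρ : ℕ → Bool | ∀ n, ρ n = false} = 0 := by
    have hle : ∀ n : ℕ, μ {ρ : ℕ → Bool | ∀ n, ρ n = false} ≤ 2⁻¹ ^ n := by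
      intro n
      rw [← hc n]
      exact measure_mono fun ρ hρ i _ => hρ i
    have h0 : Tendsto (fun n : ℕ => (2⁻¹ : ℝ≥0∞) ^ n) atTop (nhds 0) :=
      ENNReal.tendsto_pow_atTop_nhds_zero_of_lt_one (by norm_num)
    exact le_antisymm (ge_of_tendsto h0 (Filter.Eventually.of_forall hle)) zero_le
  -- the good set G
  set G : Set (ℕ → Bool) := {ρ | ∃ N, ∀ n, N ≤ n → ρ n = true} with hGdef
  have hGm : MeasurableSet G := by
    have : G = ⋃ N : ℕ, ⋂ n : ℕ, ⋂ (_ : N ≤ n), (fun ρ : ℕ → Bool => ρ n) ⁻¹' {true} := by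
      ext ρ; simp [hGdef]
    rw [this]
    exact MeasurableSet.iUnion fun N => MeasurableSet.iInter fun n =>
      MeasurableSet.iInter fun _ => (measurable_pi_apply n) (measurableSet_singleton _)
  have hGc : μ Gᶜ = 0 := by
    have hsub : Gᶜ ⊆ {ρ : ℕ → Bool | ∀ n, ρ n = false}
        ∪ ⋃ n, {ρ : ℕ → Bool | ρ n = true ∧ ρ (n + 1) = false} := by
      intro ρ hρ
      rw [Set.mem_union]
      by_contra hcon
      push_neg at hcon
      obtain ⟨h1, h2⟩ := hcon
      simp only [Set.mem_setOf_eq, not_forall] at h1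
      obtain ⟨m, hm⟩ := h1
      have hmt : ρ m = true := by cases h : ρ m <;> simp_all
      have h2' : ∀ n, ¬(ρ n = true ∧ ρ (n + 1) = false) := by
        intro n hn
        exact h2 (Set.mem_iUnion.2 ⟨n, hn⟩)
      have key : ∀ k, ρ (m + k) = true := by
        intro k
        induction k with
        | zero => simpa using hmt
        | succ k ih =>
          cases h : ρ (m + k + 1)
          · exact absurd ⟨ih, h⟩ (h2' (m + k))
          · rfl
      exact hρ ⟨m, fun n hn => by
        have := key (n - m); rwa [Nat.add_sub_cancel' hn] at this⟩
    refine le_antisymm (le_trans (measure_mono hsub) ?_) zero_le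
    refine le_trans (measure_union_le _ _) ?_
    rw [hA, measure_iUnion_null hB]
    simp
  have hG1 : μ G = 1 := (prob_compl_eq_zero_iff hGm).mp hGc
  -- parity is trivially satisfied
  have hpar : ParitySet (fun _ : Bool => 0) = Set.univ := by
    ext ρ
    simp only [ParitySet, Set.mem_setOf_eq, Set.mem_univ, iff_true]
    rcases Set.eq_empty_or_nonempty (infSet ρ) with h | h
    · simp [h]
    · rw [Set.Nonempty.image_const h 0]
      simp
  -- G satisfies the mean-payoff objective
  have hGMP : G ⊆ MeanPayoffGe exw 0 := by
    rintro ρ ⟨N, hN⟩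
    have hw0 : ∀ n, N ≤ n → exw (ρ n) (ρ (n + 1)) = 0 := by
      intro n hn
      rw [hN n hn, hN (n + 1) (le_trans hn (Nat.le_succ n))]
      rfl
    have hEL' : ∀ k, EL exw ρ (N + k) = EL exw ρ N := by
      intro k
      induction k with
      | zero => rfl
      | succ k ih =>
        show EL exw ρ ((N + k) + 1) = EL exw ρ N
        rw [EL, Finset.sum_range_succ, ← EL, ih, hw0 _ (Nat.le_add_right _ _), add_zero]
    have hEL : ∀ n, N ≤ n → EL exw ρ n = EL exw ρ N := by
      intro n hn
      obtain ⟨k, rfl⟩ := Nat.exists_eq_add_of_le hn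
      exact hEL' k
    have hten : Tendsto (fun n : ℕ => (EL exw ρ n : ℝ) / n) atTop (nhds 0) := by
      have h1 : Tendsto (fun n : ℕ => (EL exw ρ N : ℝ) / n) atTop (nhds 0) :=
        tendsto_const_div_atTop_nhds_zero_nat _
      refine h1.congr' ?_
      filter_upwards [eventually_ge_atTop N] with n hn
      rw [hEL n hn]
    show (0 : ℝ) ≤ MP exw ρ
    rw [MP, hten.liminf_eq]
  constructor
  · refine le_antisymm prob_le_one ?_
    calc (1 : ℝ≥0∞) = μ G := hG1.symm
      _ ≤ μ (ParitySet (fun _ : Bool => 0) ∩ MeanPayoffGe exw 0) :=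
        measure_mono fun ρ hρ => ⟨by rw [hpar]; trivial, hGMP hρ⟩
  · intro c₀
    have hCP : ParitySet (fun _ : Bool => 0) ∩ PosEnergy exw c₀ ⊆
        {ρ : ℕ → Bool | ∀ i ≤ c₀ + 1, ρ i = false}ᶜ := by
      rintro ρ ⟨_, hE⟩ hC
      have h1 := hE (c₀ + 1)
      rw [EL_allfalse ρ (c₀ + 1) hC] at h1
      push_cast at h1
      omega
    calc μ (ParitySet (fun _ : Bool => 0) ∩ PosEnergy exw c₀)
        ≤ μ ({ρ : ℕ → Bool | ∀ i ≤ c₀ + 1, ρ i = false}ᶜ) := measure_mono hCP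
      _ = 1 - μ {ρ : ℕ → Bool | ∀ i ≤ c₀ + 1, ρ i = false} :=
        prob_compl_eq_one_sub (hmc _ _)
      _ < 1 := by
        rw [hc (c₀ + 1)]
        exact ENNReal.sub_lt_self ENNReal.one_ne_top one_ne_zero
          (pow_ne_zero _ (by norm_num))


end MPP
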